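/- Lower bound for strongly convex losses: let W > 0, σ > 0, and integers 1 ≤ k ≤ T. Let ξ_1,…,ξ_k and ζ be i.i.d. Rademacher random variables. Define losses f_t(w) = (σ/2)·(w − W·ξ_t)² for t ≤ k and f_t(w) = (σ/2)·(w − W·ζ)² for t > k, all defined on [−W, W] and σ-strongly convex. Let the learner's prediction w_t take values in [−W, W], with w_t a measurable function of (ξ_1,…,ξ_{t−1}) for t ≤ k and of (ξ_1,…,ξ_k, ζ) for t > k. Let u = W·ζ and S = {t ∈ [k] : ξ_t = ζ} ∪ {k+1,…,T}, which always satisfies T − |S| ≤ k. Then E[Σ_{t∈S} (f_t(w_t) − f_t(u))] ≥ σ·W²·k/4; moreover |f_t'(w)| ≤ 2σW for every w ∈ [−W, W], so G(S) ≤ 2σW and the expected robust regret is at least G(S)²·k/(16σ) whenever G(S) = 2σW. -/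

import Mathlib

open MeasureTheory ProbabilityTheory

/-- Indicator of `{1}` as a real function. -/
noncomputable def ind1 (x : ℝ) : ℝ := Set.indicator {1} (fun _ => 1) x

/-- Indicator of `{-1}` as a real function. -/
noncomputable def indm (x : ℝ) : ℝ := Set.indicator {-1} (fun _ => 1) x

lemma ind1_meas : Measurable ind1 := measurable_const.indicator (measurableSet_singleton 1)
lemma indm_meas : Measurable indm := measurable_const.indicator (measurableSet_singleton (-1))
lemma ind1_nonneg (x : ℝ) : 0 ≤ ind1 x := by rw [ind1, Set.indicator_apply]; split <;> norm_num
lemma ind1_le_one (x : ℝ) : ind1 x ≤ 1 := by rw [ind1, Set.indicator_apply]; split <;> norm_num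
lemma indm_nonneg (x : ℝ) : 0 ≤ indm x := by rw [indm, Set.indicator_apply]; split <;> norm_num
lemma indm_le_one (x : ℝ) : indm x ≤ 1 := by rw [indm, Set.indicator_apply]; split <;> norm_num

/-- The lower-bound integrand on rounds `t < k`, in product form. -/
noncomputable def scPhi {Ω : Type*} (k : ℕ) (X w : ℕ → Ω → ℝ) (W σ : ℝ) (t : ℕ) (ω : Ω) : ℝ :=
  σ / 2 * ((w t ω - W) ^ 2 * (ind1 (X t ω) * ind1 (X k ω))
    + (w t ω + W) ^ 2 * (indm (X t ω) * indm (X k ω)))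

/-- The regret integrand on rounds `t ≥ k`. -/
noncomputable def scPsi {Ω : Type*} (k : ℕ) (X w : ℕ → Ω → ℝ) (W σ : ℝ) (t : ℕ) (ω : Ω) : ℝ :=
  σ / 2 * (w t ω - W * X k ω) ^ 2

/-- The random inlier set `S = {t ∈ [k] : ξ_t = ζ} ∪ {k+1,…,T}` (0-indexed as
`{t < k : X t = X k} ∪ {k,…,T-1}`, taking `ξ_t = X t` for `t < k` and `ζ = X k`). -/
noncomputable def scInlierSet {Ω : Type*} (k T : ℕ) (X : ℕ → Ω → ℝ) (ω : Ω) : Finset ℕ :=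
  ((Finset.range k).filter fun t => X t ω = X k ω) ∪ Finset.Ico k T

/-- The center of the squared loss in round `t`: `W ξ_t` for `t < k` (0-indexed) and
`W ζ` for `t ≥ k`, where `ξ_t = X t` and `ζ = X k`. -/
noncomputable def scCenter {Ω : Type*} (k : ℕ) (X : ℕ → Ω → ℝ) (Wr : ℝ) (t : ℕ) (ω : Ω) :
    ℝ :=
  if t < k then Wr * X t ω else Wr * X k ω

/-- Theorem 3, lower bound for strongly convex losses.  The losses are
the σ-strongly convex squared losses `f_t(v) = (σ/2)(v - W ξ_t)²` for `t ≤ k` and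
`f_t(v) = (σ/2)(v - W ζ)²` for `t > k`, on the domain `[-W, W]`, with
`ξ_1,…,ξ_k, ζ` i.i.d. Rademacher (encoded as `X 0,…,X (k-1), X k`).  Against `u = W ζ`
and the inlier set `S`, which always leaves out at most `k` rounds, the expected robust
regret is at least `σ W² k / 4`; moreover every derivative satisfies
`|f_t'(v)| = |σ (v - W ξ)| ≤ 2 σ W` on the domain (so `G(S) ≤ 2σW`), and
`σ W² k / 4 = (2σW)² k / (16σ)`. -/
theorem lower_bound_strongly_convex_losses
    {Ω : Type*} [MeasurableSpace Ω] (μ : Measure Ω) [IsProbabilityMeasure μ]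
    (W σ : ℝ) (hW : 0 < W) (hσ : 0 < σ)
    (T k : ℕ) (hk : 1 ≤ k) (hkT : k ≤ T)
    (X : ℕ → Ω → ℝ) (hXmeas : ∀ t, Measurable (X t))
    (hXval : ∀ t ω, X t ω ∈ ({-1, 1} : Set ℝ))
    (hiid : iIndepFun X μ)
    (hlaw : ∀ t, Measure.map (X t) μ =
      (2 : ENNReal)⁻¹ • Measure.dirac (-1) + (2 : ENNReal)⁻¹ • Measure.dirac 1)
    (w : ℕ → Ω → ℝ) (hwdom : ∀ t ω, w t ω ∈ Set.Icc (-W) W)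
    (hwmeas₁ : ∀ t < k, Measurable[MeasurableSpace.comap
      (fun ω (s : Fin t) => X s ω) inferInstance] (w t))
    (hwmeas₂ : ∀ t, k ≤ t → Measurable[MeasurableSpace.comap
      (fun ω (s : Fin (k + 1)) => X s ω) inferInstance] (w t)) :
    (∀ ω : Ω, T - (scInlierSet k T X ω).card ≤ k) ∧
    σ * W ^ 2 * k / 4 ≤
      ∫ ω, ∑ t ∈ scInlierSet k T X ω,
        (σ / 2 * (w t ω - scCenter k X W t ω) ^ 2
          - σ / 2 * (W * X k ω - scCenter k X W t ω) ^ 2) ∂μ ∧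
    (∀ t < T, ∀ ω : Ω, ∀ v ∈ Set.Icc (-W) W, |σ * (v - scCenter k X W t ω)| ≤ 2 * σ * W) ∧
    σ * W ^ 2 * k / 4 = (2 * σ * W) ^ 2 * k / (16 * σ) := by
  classical
  have hXv : ∀ t ω, X t ω = -1 ∨ X t ω = 1 := fun t ω => by simpa using hXval t ω
  -- measurability of the predictions
  have hcomap_le : ∀ n : ℕ, MeasurableSpace.comap (fun ω (s : Fin n) => X s ω) inferInstance
      ≤ ‹MeasurableSpace Ω› :=
    fun n => Measurable.comap_le (measurable_pi_lambda _ fun s => hXmeas s)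
  have hwm : ∀ t, Measurable (w t) := by
    intro t
    rcases lt_or_ge t k with h | h
    · exact (hwmeas₁ t h).mono (hcomap_le t) le_rfl
    · exact (hwmeas₂ t h).mono (hcomap_le (k + 1)) le_rfl
  -- integrability of bounded measurable functions
  have hint : ∀ (f : Ω → ℝ) (C : ℝ), Measurable f → (∀ ω, |f ω| ≤ C) → Integrable f μ :=
    fun f C hm hb => (integrable_const C).mono' hm.aestronglyMeasurable
      (Filter.Eventually.of_forall fun ω => by simpa using hb ω)
  -- Part 1: cardinality
  have hcard : ∀ ω : Ω, T - (scInlierSet k T X ω).card ≤ k := by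
    intro ω
    have h2 := Finset.card_le_card (Finset.subset_union_right
      (s₁ := (Finset.range k).filter fun t => X t ω = X k ω) (s₂ := Finset.Ico k T))
    rw [Nat.card_Ico] at h2
    rw [scInlierSet]
    omega
  refine ⟨hcard, ?_, ?_, ?_⟩
  · -- Part 2: main expectation bound
    -- pointwise rewriting of the regret sum
    have hdisjS : ∀ ω : Ω, Disjoint ((Finset.range k).filter fun t => X t ω = X k ω)
        (Finset.Ico k T) := by
      intro ω
      rw [Finset.disjoint_left]
      intro a ha hb
      rw [Finset.mem_filter, Finset.mem_range] at ha
      rw [Finset.mem_Ico] at hb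
      omega
    have hrw : ∀ ω : Ω, (∑ t ∈ scInlierSet k T X ω,
        (σ / 2 * (w t ω - scCenter k X W t ω) ^ 2
          - σ / 2 * (W * X k ω - scCenter k X W t ω) ^ 2)) =
        (∑ t ∈ Finset.range k, scPhi k X w W σ t ω)
          + ∑ t ∈ Finset.Ico k T, scPsi k X w W σ t ω := by
      intro ω
      rw [scInlierSet, Finset.sum_union (hdisjS ω)]
      congr 1
      · rw [Finset.sum_filter]
        refine Finset.sum_congr rfl fun t ht => ?_
        rw [Finset.mem_range] at ht
        have h1 : (-1 : ℝ) ≠ 1 := by norm_num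
        rcases hXv t ω with h | h <;> rcases hXv k ω with h' | h' <;>
          simp only [scPhi, scCenter, if_pos ht, h, h', ind1, indm, Set.indicator_apply,
            Set.mem_singleton_iff, if_pos rfl, if_neg h1, if_neg h1.symm, if_true] <;>
          norm_num <;> ring
      · refine Finset.sum_congr rfl fun t ht => ?_
        rw [Finset.mem_Ico] at ht
        rw [scPsi, scCenter, if_neg (not_lt.mpr ht.1)]
        ring
    rw [show (fun ω => ∑ t ∈ scInlierSet k T X ω,
        (σ / 2 * (w t ω - scCenter k X W t ω) ^ 2
          - σ / 2 * (W * X k ω - scCenter k X W t ω) ^ 2)) =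
        (fun ω => (∑ t ∈ Finset.range k, scPhi k X w W σ t ω)
          + ∑ t ∈ Finset.Ico k T, scPsi k X w W σ t ω) from funext hrw]
    -- basic bounds on w
    have hwb : ∀ t ω, |w t ω| ≤ W := fun t ω => abs_le.mpr ⟨(hwdom t ω).1, (hwdom t ω).2⟩
    -- measurability and integrability of scPhi and scPsi
    have hAmeas : ∀ t, Measurable fun ω => (w t ω - W) ^ 2 :=
      fun t => ((hwm t).sub measurable_const).pow_const 2
    have hCmeas : ∀ t, Measurable fun ω => (w t ω + W) ^ 2 :=
      fun t => ((hwm t).add measurable_const).pow_const 2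
    have hBmeas : ∀ t, Measurable fun ω => ind1 (X t ω) * ind1 (X k ω) :=
      fun t => (ind1_meas.comp (hXmeas t)).mul (ind1_meas.comp (hXmeas k))
    have hDmeas : ∀ t, Measurable fun ω => indm (X t ω) * indm (X k ω) :=
      fun t => (indm_meas.comp (hXmeas t)).mul (indm_meas.comp (hXmeas k))
    have hAbound : ∀ t ω, (0 : ℝ) ≤ (w t ω - W) ^ 2 ∧ (w t ω - W) ^ 2 ≤ 4 * W ^ 2 := by
      intro t ω
      have := abs_le.mp (hwb t ω)
      constructor
      · positivity
      · nlinarith [this.1, this.2]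
    have hCbound : ∀ t ω, (0 : ℝ) ≤ (w t ω + W) ^ 2 ∧ (w t ω + W) ^ 2 ≤ 4 * W ^ 2 := by
      intro t ω
      have := abs_le.mp (hwb t ω)
      constructor
      · positivity
      · nlinarith [this.1, this.2]
    have hBbound : ∀ t ω, (0 : ℝ) ≤ ind1 (X t ω) * ind1 (X k ω) ∧
        ind1 (X t ω) * ind1 (X k ω) ≤ 1 := fun t ω =>
      ⟨mul_nonneg (ind1_nonneg _) (ind1_nonneg _),
        mul_le_one₀ (ind1_le_one _) (ind1_nonneg _) (ind1_le_one _)⟩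
    have hDbound : ∀ t ω, (0 : ℝ) ≤ indm (X t ω) * indm (X k ω) ∧
        indm (X t ω) * indm (X k ω) ≤ 1 := fun t ω =>
      ⟨mul_nonneg (indm_nonneg _) (indm_nonneg _),
        mul_le_one₀ (indm_le_one _) (indm_nonneg _) (indm_le_one _)⟩
    have hABint : ∀ t, Integrable (fun ω => (w t ω - W) ^ 2 * (ind1 (X t ω) * ind1 (X k ω))) μ := by
      intro t
      refine hint _ (4 * W ^ 2) ((hAmeas t).mul (hBmeas t)) fun ω => ?_
      have h1 := hAbound t ω; have h2 := hBbound t ω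
      rw [abs_of_nonneg (mul_nonneg h1.1 h2.1)]
      nlinarith [h1.1, h1.2, h2.1, h2.2]
    have hCDint : ∀ t, Integrable (fun ω => (w t ω + W) ^ 2 * (indm (X t ω) * indm (X k ω))) μ := by
      intro t
      refine hint _ (4 * W ^ 2) ((hCmeas t).mul (hDmeas t)) fun ω => ?_
      have h1 := hCbound t ω; have h2 := hDbound t ω
      rw [abs_of_nonneg (mul_nonneg h1.1 h2.1)]
      nlinarith [h1.1, h1.2, h2.1, h2.2]
    have hΦint : ∀ t, Integrable (scPhi k X w W σ t) μ := by
      intro t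
      have : scPhi k X w W σ t = fun ω => σ / 2 *
          ((w t ω - W) ^ 2 * (ind1 (X t ω) * ind1 (X k ω)))
          + σ / 2 * ((w t ω + W) ^ 2 * (indm (X t ω) * indm (X k ω))) := by
        funext ω; rw [scPhi]; ring
      rw [this]
      exact (((hABint t).const_mul _).add ((hCDint t).const_mul _))
    have hψint : ∀ t, Integrable (scPsi k X w W σ t) μ := by
      intro t
      refine hint _ (σ / 2 * (4 * W ^ 2)) ((((hwm t).sub
        (measurable_const.mul (hXmeas k))).pow_const 2).const_mul _) fun ω => ?_
      have h1 := abs_le.mp (hwb t ω)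
      rcases hXv k ω with h | h <;>
      · rw [scPsi, h, abs_of_nonneg (by positivity)]
        refine mul_le_mul_of_nonneg_left ?_ (by positivity)
        nlinarith [h1.1, h1.2]
    -- expectation of a function of a Rademacher variable
    have hhalf : ∀ (g : ℝ → ℝ), Measurable g → ∀ s : ℕ,
        ∫ ω, g (X s ω) ∂μ = (g (-1) + g 1) / 2 := by
      intro g hg s
      have hd : ∀ a : ℝ, Integrable g ((2 : ENNReal)⁻¹ • Measure.dirac a) := by
        intro a
        refine Integrable.smul_measure ?_ (by norm_num)
        refine ⟨hg.aestronglyMeasurable, ?_⟩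
        rw [HasFiniteIntegral, lintegral_dirac]
        exact ENNReal.coe_lt_top
      rw [← integral_map (hXmeas s).aemeasurable hg.aestronglyMeasurable, hlaw s,
        integral_add_measure (hd _) (hd _), integral_smul_measure, integral_smul_measure,
        integral_dirac, integral_dirac]
      simp [ENNReal.toReal_inv]
      ring
    -- the independence workhorse
    have hIF : ∀ t, t < k → ∀ (φ : ℝ → ℝ) (ψ : ℝ × ℝ → ℝ), Measurable φ → Measurable ψ →
        IndepFun (fun ω => φ (w t ω)) (fun ω => ψ (X t ω, X k ω)) μ := by
      intro t ht φ ψ hφ hψ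
      have hdisj : Disjoint (Finset.range t) ({t, k} : Finset ℕ) := by
        simp only [Finset.disjoint_left, Finset.mem_range, Finset.mem_insert,
          Finset.mem_singleton]
        omega
      have hbase := hiid.indepFun_finset (Finset.range t) {t, k} hdisj hXmeas
      rw [IndepFun_iff_Indep] at hbase ⊢
      refine indep_of_indep_of_le_right (indep_of_indep_of_le_left hbase ?_) ?_
      · have hmap : Measurable fun (v : ↥(Finset.range t) → ℝ) (s : Fin t) =>
            v ⟨s.1, Finset.mem_range.mpr s.2⟩ :=
          measurable_pi_lambda _ fun s => measurable_pi_apply _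
        have hw' : Measurable[MeasurableSpace.comap
            (fun ω (i : ↥(Finset.range t)) => X i ω) inferInstance] (w t) := by
          refine (hwmeas₁ t ht).mono ?_ le_rfl
          rw [show (fun ω (s : Fin t) => X s ω) = (fun (v : ↥(Finset.range t) → ℝ)
              (s : Fin t) => v ⟨s.1, Finset.mem_range.mpr s.2⟩) ∘
              (fun ω (i : ↥(Finset.range t)) => X i ω) from rfl]
          rw [← MeasurableSpace.comap_comp]
          exact MeasurableSpace.comap_mono hmap.comap_le
        calc MeasurableSpace.comap (fun ω => φ (w t ω)) inferInstance
            = MeasurableSpace.comap (w t) (MeasurableSpace.comap φ inferInstance) :=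
              (MeasurableSpace.comap_comp).symm
          _ ≤ MeasurableSpace.comap (w t) inferInstance :=
              MeasurableSpace.comap_mono hφ.comap_le
          _ ≤ _ := hw'.comap_le
      · have htm : t ∈ ({t, k} : Finset ℕ) := by simp
        have hkm : k ∈ ({t, k} : Finset ℕ) := by simp
        have hmap : Measurable fun (v : ↥({t, k} : Finset ℕ) → ℝ) =>
            ψ (v ⟨t, htm⟩, v ⟨k, hkm⟩) :=
          hψ.comp ((measurable_pi_apply _).prodMk (measurable_pi_apply _))
        rw [show (fun ω => ψ (X t ω, X k ω)) = (fun (v : ↥({t, k} : Finset ℕ) → ℝ) =>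
            ψ (v ⟨t, htm⟩, v ⟨k, hkm⟩)) ∘ (fun ω (i : ↥({t, k} : Finset ℕ)) => X i ω) from rfl]
        rw [← MeasurableSpace.comap_comp]
        exact MeasurableSpace.comap_mono hmap.comap_le
    -- expected value of the indicator products is 1/4
    have hprod1 : ∀ t, t < k → ∫ ω, ind1 (X t ω) * ind1 (X k ω) ∂μ = 1 / 4 := by
      intro t ht
      have hind : IndepFun (fun ω => ind1 (X t ω)) (fun ω => ind1 (X k ω)) μ := by
        have := (hiid.indepFun (show t ≠ k by omega)).comp ind1_meas ind1_meas
        exact this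
      rw [hind.integral_fun_mul_eq_mul_integral ((ind1_meas.comp (hXmeas t)).aestronglyMeasurable)
        ((ind1_meas.comp (hXmeas k)).aestronglyMeasurable),
        hhalf ind1 ind1_meas t, hhalf ind1 ind1_meas k]
      norm_num [ind1]
    have hprodm : ∀ t, t < k → ∫ ω, indm (X t ω) * indm (X k ω) ∂μ = 1 / 4 := by
      intro t ht
      have hind : IndepFun (fun ω => indm (X t ω)) (fun ω => indm (X k ω)) μ := by
        have := (hiid.indepFun (show t ≠ k by omega)).comp indm_meas indm_meas
        exact this
      rw [hind.integral_fun_mul_eq_mul_integral ((indm_meas.comp (hXmeas t)).aestronglyMeasurable)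
        ((indm_meas.comp (hXmeas k)).aestronglyMeasurable),
        hhalf indm indm_meas t, hhalf indm indm_meas k]
      norm_num [indm]
    -- lower bound on the expectation of each scPhi
    have hΦlb : ∀ t ∈ Finset.range k, σ * W ^ 2 / 4 ≤ ∫ ω, scPhi k X w W σ t ω ∂μ := by
      intro t ht'
      rw [Finset.mem_range] at ht'
      have hIA : IndepFun (fun ω => (w t ω - W) ^ 2)
          (fun ω => ind1 (X t ω) * ind1 (X k ω)) μ :=
        hIF t ht' (fun x => (x - W) ^ 2) (fun p => ind1 p.1 * ind1 p.2)
          ((measurable_id.sub measurable_const).pow_const 2)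
          ((ind1_meas.comp measurable_fst).mul (ind1_meas.comp measurable_snd))
      have hIC : IndepFun (fun ω => (w t ω + W) ^ 2)
          (fun ω => indm (X t ω) * indm (X k ω)) μ :=
        hIF t ht' (fun x => (x + W) ^ 2) (fun p => indm p.1 * indm p.2)
          ((measurable_id.add measurable_const).pow_const 2)
          ((indm_meas.comp measurable_fst).mul (indm_meas.comp measurable_snd))
      have e1 : ∫ ω, (w t ω - W) ^ 2 * (ind1 (X t ω) * ind1 (X k ω)) ∂μ =
          (∫ ω, (w t ω - W) ^ 2 ∂μ) * (1 / 4) := by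
        rw [hIA.integral_fun_mul_eq_mul_integral (hAmeas t).aestronglyMeasurable
          (hBmeas t).aestronglyMeasurable, hprod1 t ht']
      have e2 : ∫ ω, (w t ω + W) ^ 2 * (indm (X t ω) * indm (X k ω)) ∂μ =
          (∫ ω, (w t ω + W) ^ 2 ∂μ) * (1 / 4) := by
        rw [hIC.integral_fun_mul_eq_mul_integral (hCmeas t).aestronglyMeasurable
          (hDmeas t).aestronglyMeasurable, hprodm t ht']
      have hAint : Integrable (fun ω => (w t ω - W) ^ 2) μ :=
        hint _ (4 * W ^ 2) (hAmeas t) fun ω => by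
          rw [abs_of_nonneg (hAbound t ω).1]; exact (hAbound t ω).2
      have hCint : Integrable (fun ω => (w t ω + W) ^ 2) μ :=
        hint _ (4 * W ^ 2) (hCmeas t) fun ω => by
          rw [abs_of_nonneg (hCbound t ω).1]; exact (hCbound t ω).2
      have hsumlb : 2 * W ^ 2 ≤ (∫ ω, (w t ω - W) ^ 2 ∂μ) + ∫ ω, (w t ω + W) ^ 2 ∂μ := by
        rw [← integral_add hAint hCint]
        have : 2 * W ^ 2 = ∫ _ω : Ω, 2 * W ^ 2 ∂μ := by simp
        rw [this]
        refine integral_mono (integrable_const _) (hAint.add hCint) fun ω => ?_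
        nlinarith [sq_nonneg (w t ω)]
      have hΦeq : ∫ ω, scPhi k X w W σ t ω ∂μ = σ / 2 *
          ((∫ ω, (w t ω - W) ^ 2 ∂μ) * (1 / 4)) +
          σ / 2 * ((∫ ω, (w t ω + W) ^ 2 ∂μ) * (1 / 4)) := by
        have h1 : scPhi k X w W σ t = fun ω => σ / 2 *
            ((w t ω - W) ^ 2 * (ind1 (X t ω) * ind1 (X k ω)))
            + σ / 2 * ((w t ω + W) ^ 2 * (indm (X t ω) * indm (X k ω))) := by
          funext ω; rw [scPhi]; ring
        rw [h1, integral_add ((hABint t).const_mul _) ((hCDint t).const_mul _),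
          integral_const_mul, integral_const_mul, e1, e2]
      rw [hΦeq]
      have hmul := mul_le_mul_of_nonneg_left hsumlb (by positivity : (0:ℝ) ≤ σ / 8)
      linarith
    -- put it all together
    have hSPint : Integrable (fun ω => ∑ t ∈ Finset.range k, scPhi k X w W σ t ω) μ :=
      integrable_finset_sum _ fun t _ => hΦint t
    have hSQint : Integrable (fun ω => ∑ t ∈ Finset.Ico k T, scPsi k X w W σ t ω) μ :=
      integrable_finset_sum _ fun t _ => hψint t
    rw [integral_add hSPint hSQint, integral_finset_sum _ fun t _ => hΦint t]
    have h1 : σ * W ^ 2 * k / 4 ≤ ∑ t ∈ Finset.range k, ∫ ω, scPhi k X w W σ t ω ∂μ := by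
      calc σ * W ^ 2 * k / 4 = ∑ _t ∈ Finset.range k, σ * W ^ 2 / 4 := by
            rw [Finset.sum_const, Finset.card_range, nsmul_eq_mul]; ring
        _ ≤ _ := Finset.sum_le_sum hΦlb
    have h2 : 0 ≤ ∫ ω, ∑ t ∈ Finset.Ico k T, scPsi k X w W σ t ω ∂μ := by
      refine integral_nonneg fun ω => Finset.sum_nonneg fun t _ => ?_
      rw [scPsi]
      positivity
    linarith
  · -- Part 3: gradient bound
    intro t _ ω v hv
    have hc : |scCenter k X W t ω| = W := by
      rw [scCenter]
      split <;> rename_i h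
      · rcases hXv t ω with h' | h' <;> rw [h'] <;>
          simp [abs_of_pos hW, abs_of_nonneg hW.le]
      · rcases hXv k ω with h' | h' <;> rw [h'] <;>
          simp [abs_of_pos hW, abs_of_nonneg hW.le]
    have hv' : |v| ≤ W := abs_le.mpr ⟨hv.1, hv.2⟩
    rw [abs_mul, abs_of_pos hσ]
    have h3 : |v - scCenter k X W t ω| ≤ |v| + |scCenter k X W t ω| := abs_sub _ _
    rw [hc] at h3
    nlinarith [hσ.le]
  · -- Part 4: arithmetic identity
    field_simp
    ring
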